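/- Let $X$ be a topological space, $x_0 \in X$, and suppose there is a continuous map $v : X \to [0,1]$ with $v^{-1}(0) = \{x_0\}$ such that the open set $V = \{x : v(x) < 1\}$ deformation retracts to $x_0$, i.e., there is a continuous $h : V \times [0,1] \to V$ with $h(x,0) = x$, $h(x_0,t) = x_0$, and $h(x,1) = x_0$ for all $x \in V$, $t \in [0,1]$. Then $(X, \{x_0\})$ is an NDR-pair: there exist a continuous $u : X \to [0,1]$ with $u^{-1}(0) = \{x_0\}$ and a homotopy $H : X \times [0,1] \to X$ with $H(x,0) = x$, $H(x_0,t) = x_0$, and $H(x,1) = x_0$ whenever $u(x) < 1$. -/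

import Mathlib

/-- Strøm's criterion: if `v : X → [0,1]` is continuous with `v⁻¹(0) = {x₀}` and the
open set `V = {x | v x < 1}` deformation retracts to `x₀`, then `(X, {x₀})` is an
NDR-pair. -/
theorem stmt_6 {X : Type*} [TopologicalSpace X] (x₀ : X) (v : X → ℝ)
    (hv_cont : Continuous v) (hv_mem : ∀ x, v x ∈ Set.Icc (0 : ℝ) 1)
    (hv_zero : ∀ x, v x = 0 ↔ x = x₀)
    (h : {x : X // v x < 1} × Set.Icc (0 : ℝ) 1 → {x : X // v x < 1})
    (h_cont : Continuous h)
    (h_zero : ∀ x, h (x, ⟨0, by norm_num⟩) = x)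
    (h_base : ∀ (t : Set.Icc (0 : ℝ) 1) (hx₀ : v x₀ < 1), h (⟨x₀, hx₀⟩, t) = ⟨x₀, hx₀⟩)
    (h_one : ∀ x, (h (x, ⟨1, by norm_num⟩) : X) = x₀) :
    ∃ (u : X → ℝ) (H : X × Set.Icc (0 : ℝ) 1 → X),
      Continuous u ∧ (∀ x, u x ∈ Set.Icc (0 : ℝ) 1) ∧ (∀ x, u x = 0 ↔ x = x₀) ∧
      Continuous H ∧
      (∀ x, H (x, ⟨0, by norm_num⟩) = x) ∧
      (∀ t, H (x₀, t) = x₀) ∧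
      (∀ x, u x < 1 → H (x, ⟨1, by norm_num⟩) = x₀) := by
  classical
  set φ : ℝ → ℝ := fun s => max 0 (min 1 (3 - 4 * s)) with hφ
  have hφ_cont : Continuous φ := by
    apply continuous_const.max
    exact continuous_const.min (by continuity)
  have hφ_mem : ∀ s, φ s ∈ Set.Icc (0 : ℝ) 1 := by
    intro s
    exact ⟨le_max_left _ _, max_le (by norm_num) (min_le_left _ _)⟩
  have hmem : ∀ (t : Set.Icc (0 : ℝ) 1) (s : ℝ),
      (t : ℝ) * φ s ∈ Set.Icc (0 : ℝ) 1 := by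
    intro t s
    have ht := t.2
    have hs := hφ_mem s
    constructor
    · exact mul_nonneg ht.1 hs.1
    · nlinarith [ht.1, ht.2, hs.1, hs.2]
  set H : X × Set.Icc (0 : ℝ) 1 → X := fun p =>
    if hx : v p.1 < 1 then
      (h (⟨p.1, hx⟩, ⟨(p.2 : ℝ) * φ (v p.1), hmem p.2 _⟩) : X)
    else p.1 with hH
  have hx₀lt : v x₀ < 1 := by
    have : v x₀ = 0 := (hv_zero x₀).mpr rfl
    rw [this]; norm_num
  refine ⟨fun x => min (2 * v x) 1, H, ?_, ?_, ?_, ?_, ?_, ?_, ?_⟩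
  · exact (continuous_const.mul hv_cont).min continuous_const
  · intro x
    exact ⟨le_min (by nlinarith [(hv_mem x).1]) one_pos.le, min_le_right _ _⟩
  · intro x
    constructor
    · intro h0
      have h0' : min (2 * v x) 1 = 0 := h0
      rcases min_cases (2 * v x) 1 with ⟨he, _⟩ | ⟨he, _⟩
      · rw [he] at h0'
        have : v x = 0 := by linarith
        exact (hv_zero x).mp this
      · rw [he] at h0'
        exact absurd h0' one_ne_zero
    · intro hx
      show min (2 * v x) 1 = 0
      rw [(hv_zero x).mpr hx]
      norm_num
  · -- continuity of H
    rw [continuous_iff_continuousAt]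
    intro p
    by_cases hp : v p.1 < 1
    · have hW : IsOpen {q : X × Set.Icc (0 : ℝ) 1 | v q.1 < 1} :=
        isOpen_lt (hv_cont.comp continuous_fst) continuous_const
      have hcon : ContinuousOn H {q : X × Set.Icc (0 : ℝ) 1 | v q.1 < 1} := by
        rw [continuousOn_iff_continuous_restrict]
        have heq : ({q : X × Set.Icc (0 : ℝ) 1 | v q.1 < 1}.domRestrict H) =
            fun q => (h (⟨q.val.1, q.2⟩,
              ⟨(q.val.2 : ℝ) * φ (v q.val.1), hmem q.val.2 _⟩) : X) := by
          funext q
          rw [Set.restrict_apply, hH]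
          exact dif_pos q.2
        rw [heq]
        apply continuous_subtype_val.comp
        apply h_cont.comp
        apply Continuous.prodMk
        · exact Continuous.subtype_mk (continuous_fst.comp continuous_subtype_val) _
        · apply Continuous.subtype_mk
          exact (continuous_subtype_val.comp
            (continuous_snd.comp continuous_subtype_val)).mul
            (hφ_cont.comp (hv_cont.comp (continuous_fst.comp continuous_subtype_val)))
      exact hcon.continuousAt (hW.mem_nhds hp)
    · have hp' : v p.1 = 1 := le_antisymm (hv_mem p.1).2 (not_lt.mp hp)
      have hW2 : {q : X × Set.Icc (0 : ℝ) 1 | (3 : ℝ) / 4 < v q.1} ∈ nhds p := by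
        apply (isOpen_lt continuous_const (hv_cont.comp continuous_fst)).mem_nhds
        have : (3 : ℝ) / 4 < v p.1 := by linarith
        exact this
      have heqn : ∀ q ∈ {q : X × Set.Icc (0 : ℝ) 1 | (3 : ℝ) / 4 < v q.1},
          H q = q.1 := by
        intro q hq
        simp only [Set.mem_setOf_eq] at hq
        rw [hH]
        dsimp only
        split_ifs with hq1
        · have hφ0 : φ (v q.1) = 0 := by
            rw [hφ]
            dsimp only
            rw [max_eq_left]
            apply min_le_of_right_le
            linarith
          have harg : (⟨(q.2 : ℝ) * φ (v q.1), hmem q.2 _⟩ : Set.Icc (0 : ℝ) 1) =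
              ⟨0, by norm_num⟩ := by
            ext; simp [hφ0]
          rw [harg, h_zero]
        · rfl
      apply ContinuousAt.congr continuousAt_fst
      exact Filter.eventuallyEq_of_mem hW2 fun q hq => (heqn q hq).symm
  · intro x
    rw [hH]
    dsimp only
    split_ifs with hx
    · have : (⟨((⟨0, by norm_num⟩ : Set.Icc (0:ℝ) 1) : ℝ) * φ (v x), hmem _ _⟩ :
          Set.Icc (0 : ℝ) 1) = ⟨0, by norm_num⟩ := by
        ext; simp
      rw [this, h_zero]
    · rfl
  · intro t
    rw [hH]
    dsimp only
    rw [dif_pos hx₀lt]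
    have hφ1 : φ (v x₀) = 1 := by
      rw [(hv_zero x₀).mpr rfl, hφ]
      norm_num
    have harg : (⟨(t : ℝ) * φ (v x₀), hmem t _⟩ : Set.Icc (0 : ℝ) 1) =
        ⟨(t : ℝ), t.2⟩ := by
      ext; simp [hφ1]
    rw [harg]
    have := h_base ⟨(t : ℝ), t.2⟩ hx₀lt
    rw [this]
  · intro x hux
    have hvx : v x < 1 / 2 := by
      have hux' : min (2 * v x) 1 < 1 := hux
      rcases min_cases (2 * v x) 1 with ⟨he, _⟩ | ⟨he, _⟩
      · rw [he] at hux'; linarith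
      · rw [he] at hux'; exact absurd hux' (lt_irrefl 1)
    have hx1 : v x < 1 := by linarith
    rw [hH]
    dsimp only
    rw [dif_pos hx1]
    have hφ1 : φ (v x) = 1 := by
      rw [hφ]
      dsimp only
      rw [min_eq_left (by linarith), max_eq_right (by linarith)]
    have harg : (⟨((⟨1, by norm_num⟩ : Set.Icc (0:ℝ) 1) : ℝ) * φ (v x), hmem _ _⟩ :
        Set.Icc (0 : ℝ) 1) = ⟨1, by norm_num⟩ := by
      ext; simp [hφ1]
    rw [harg, h_one]
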